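/- No many-fit-one stationary configuration of the entropic OT loss: let θ* ∈ ℝ^K have distinct entries, let 1 ≤ k₁ ≤ K-1, let G₁ ⊆ {1,…,K} be the set of indices of the k₁ smallest entries of θ*, and let Δ := min{|θ*_{g₁} - θ*_{g₂}| : g₁ ∈ G₁, g₂ ∉ G₁} > 0 be the gap between the two groups. Suppose θ ∈ ℝ^K and I ⊆ {1,…,K} with |I| > k₁ are such that there is a surjection τ : I → G₁ with |θ_k - θ*_{τ(k)}| ≤ δ for all k ∈ I. Fix γ with 0 < γ < 1 - k₁/|I| and suppose the separation condition Δ ≥ Kσ / (√(2π) ((1-γ)|I| - k₁)) holds and δ < γΔ. Then there is no weight vector a ∈ (0,1)^K with Σ_k a_k = 1 satisfying simultaneously, for every k, the marginal conditions ∫ Ψ_k(y,θ,a) dQ*(y) = 1/K and the first-order conditions ∫ (y - θ_k) Ψ_k(y,θ,a) dQ*(y) = 0. -/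

import Mathlib

open MeasureTheory

/-- One-dimensional Gaussian density with mean `μ` and variance `σ²`. -/
noncomputable def gauss1 (σ μ y : ℝ) : ℝ :=
  (Real.sqrt (2 * Real.pi * σ ^ 2))⁻¹ * Real.exp (-(y - μ) ^ 2 / (2 * σ ^ 2))

/-- The equal-weight Gaussian mixture measure `Q*` on `ℝ` with centers `θ*`. -/
noncomputable def mixQ (K : ℕ) (σ : ℝ) (θstar : Fin K → ℝ) : Measure ℝ :=
  volume.withDensity fun y => ENNReal.ofReal ((1 / K : ℝ) * ∑ k, gauss1 σ (θstar k) y)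

/-- The responsibilities `Ψ_k(y, θ, a)`. -/
noncomputable def resp (K : ℕ) (σ : ℝ) (θ : Fin K → ℝ) (a : Fin K → ℝ)
    (k : Fin K) (y : ℝ) : ℝ :=
  a k * Real.exp (-(y - θ k) ^ 2 / (2 * σ ^ 2)) /
    ∑ j, a j * Real.exp (-(y - θ j) ^ 2 / (2 * σ ^ 2))

section aux

variable {σ : ℝ}

lemma sqrt_two_pi_sq (hσ : 0 < σ) : Real.sqrt (2 * Real.pi * σ ^ 2) = Real.sqrt (2 * Real.pi) * σ := by
  rw [Real.sqrt_mul (by positivity), Real.sqrt_sq hσ.le]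

lemma gauss1_nonneg (σ μ y : ℝ) : 0 ≤ gauss1 σ μ y := by
  unfold gauss1; positivity

lemma gauss1_continuous (σ μ : ℝ) : Continuous (gauss1 σ μ) := by
  unfold gauss1; fun_prop

lemma gauss1_eq_pdf (hσ : 0 < σ) (μ : ℝ) :
    gauss1 σ μ = ProbabilityTheory.gaussianPDFReal μ ⟨σ ^ 2, sq_nonneg σ⟩ := rfl

lemma var_ne (hσ : 0 < σ) : (⟨σ ^ 2, sq_nonneg σ⟩ : NNReal) ≠ 0 := by
  intro h
  exact absurd (congrArg NNReal.toReal h) (by exact (pow_pos hσ 2).ne')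

lemma gauss1_integrable (hσ : 0 < σ) (μ : ℝ) : Integrable (gauss1 σ μ) := by
  rw [gauss1_eq_pdf hσ]; exact ProbabilityTheory.integrable_gaussianPDFReal μ _

lemma gauss1_integral (hσ : 0 < σ) (μ : ℝ) : ∫ y, gauss1 σ μ y = 1 := by
  rw [gauss1_eq_pdf hσ]
  exact ProbabilityTheory.integral_gaussianPDFReal_eq_one μ (var_ne hσ)

lemma exp_form (hσ : 0 < σ) (μ y : ℝ) :
    Real.exp (-(y - μ) ^ 2 / (2 * σ ^ 2)) = Real.exp (-(2 * σ ^ 2)⁻¹ * (y - μ) ^ 2) := by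
  congr 1
  field_simp

lemma gauss1_integrable_id_mul (hσ : 0 < σ) (μ : ℝ) :
    Integrable fun y => y * gauss1 σ μ y := by
  have hb : (0:ℝ) < (2 * σ ^ 2)⁻¹ := by positivity
  have h1 : Integrable (fun x : ℝ =>
      (x + μ) * ((Real.sqrt (2 * Real.pi * σ ^ 2))⁻¹ * Real.exp (-(2 * σ ^ 2)⁻¹ * x ^ 2))) := by
    have h := (((integrable_mul_exp_neg_mul_sq hb).add
      ((integrable_exp_neg_mul_sq hb).const_mul μ)).const_mul
      ((Real.sqrt (2 * Real.pi * σ ^ 2))⁻¹))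
    exact h.congr (Filter.Eventually.of_forall fun x => by simp only [Pi.add_apply]; ring)
  have h2 := h1.comp_sub_right μ
  refine h2.congr (Filter.Eventually.of_forall fun y => ?_)
  show (y - μ + μ) * ((Real.sqrt (2 * Real.pi * σ ^ 2))⁻¹ * Real.exp (-(2 * σ ^ 2)⁻¹ * (y - μ) ^ 2))
      = y * ((Real.sqrt (2 * Real.pi * σ ^ 2))⁻¹ * Real.exp (-(y - μ) ^ 2 / (2 * σ ^ 2)))
  rw [exp_form hσ]
  ring

lemma gauss1_integrable_sub_mul (hσ : 0 < σ) (μ : ℝ) :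
    Integrable fun y => (y - μ) * gauss1 σ μ y := by
  have h := (gauss1_integrable_id_mul hσ μ).sub ((gauss1_integrable hσ μ).const_mul μ)
  exact h.congr (Filter.Eventually.of_forall fun y => by simp only [Pi.sub_apply]; ring)

lemma integral_Ioi_id_mul_exp {b : ℝ} (hb : 0 < b) :
    ∫ r in Set.Ioi (0:ℝ), r * Real.exp (-b * r ^ 2) = (2 * b)⁻¹ := by
  have hc : 0 < (b : ℂ).re := by simpa using hb
  have h := integral_mul_cexp_neg_mul_sq hc
  have heq : (fun r : ℝ => (r : ℂ) * Complex.exp (-(b:ℂ) * (r:ℂ) ^ 2))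
      = fun r : ℝ => (RCLike.ofReal (r * Real.exp (-b * r ^ 2)) : ℂ) := by
    funext r
    rw [show (RCLike.ofReal (r * Real.exp (-b * r ^ 2)) : ℂ)
      = ((r * Real.exp (-b * r ^ 2) : ℝ) : ℂ) from rfl]
    rw [Complex.ofReal_mul, Complex.ofReal_exp]
    norm_cast
  rw [heq, integral_ofReal] at h
  rw [show (2 * (b:ℂ))⁻¹ = (((2 * b : ℝ)⁻¹ : ℝ) : ℂ) by norm_cast] at h
  exact Complex.ofReal_inj.mp h

lemma gauss1_integral_max (hσ : 0 < σ) (μ : ℝ) :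
    ∫ y, max (μ - y) 0 * gauss1 σ μ y = σ / Real.sqrt (2 * Real.pi) := by
  have hb : (0:ℝ) < (2 * σ ^ 2)⁻¹ := by positivity
  set c : ℝ := (Real.sqrt (2 * Real.pi * σ ^ 2))⁻¹ with hc
  set F : ℝ → ℝ := fun t => max t 0 * (c * Real.exp (-(2 * σ ^ 2)⁻¹ * t ^ 2)) with hF
  have h1 : ∀ y, max (μ - y) 0 * gauss1 σ μ y = F (μ - y) := by
    intro y
    have hsq : -(2 * σ ^ 2)⁻¹ * (μ - y) ^ 2 = -(y - μ) ^ 2 / (2 * σ ^ 2) := by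
      field_simp; ring
    simp only [hF, hsq]
    rfl
  have h2 : (fun y => F (μ - y)) = fun y => (fun x => F (-x)) (y - μ) := by
    funext y; simp only [neg_sub]
  calc ∫ y, max (μ - y) 0 * gauss1 σ μ y = ∫ y, F (μ - y) := by simp only [h1]
    _ = ∫ x, F (-x) := by rw [h2]; exact integral_sub_right_eq_self (fun x => F (-x)) μ
    _ = ∫ x, F x := integral_neg_eq_self F volume
    _ = ∫ t in Set.Ioi (0:ℝ), t * (c * Real.exp (-(2 * σ ^ 2)⁻¹ * t ^ 2)) := by
        rw [← integral_indicator measurableSet_Ioi]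
        refine integral_congr_ae (Filter.Eventually.of_forall fun t => ?_)
        rcases lt_or_ge 0 t with h | h
        · rw [Set.indicator_of_mem (Set.mem_Ioi.mpr h)]; simp only [hF, max_eq_left h.le]
        · rw [Set.indicator_of_notMem (Set.notMem_Ioi.mpr h)]
          simp only [hF, max_eq_right h, zero_mul]
    _ = c * ∫ t in Set.Ioi (0:ℝ), t * Real.exp (-(2 * σ ^ 2)⁻¹ * t ^ 2) := by
        rw [← MeasureTheory.integral_const_mul]
        exact integral_congr_ae (Filter.Eventually.of_forall fun t => by ring)
    _ = c * (2 * (2 * σ ^ 2)⁻¹)⁻¹ := by rw [integral_Ioi_id_mul_exp hb]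
    _ = σ / Real.sqrt (2 * Real.pi) := by
        rw [hc, sqrt_two_pi_sq hσ]
        have h2π : (0:ℝ) < Real.sqrt (2 * Real.pi) := by positivity
        field_simp

lemma gauss1_integrable_max (hσ : 0 < σ) (μ : ℝ) :
    Integrable fun y => max (μ - y) 0 * gauss1 σ μ y := by
  refine Integrable.mono' (gauss1_integrable_sub_mul hσ μ).abs ?_
    (Filter.Eventually.of_forall fun y => ?_)
  · exact (((continuous_const.sub continuous_id).max continuous_const).mul
      (gauss1_continuous σ μ)).aestronglyMeasurable
  · rw [Real.norm_eq_abs, abs_mul, abs_mul]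
    refine mul_le_mul_of_nonneg_right ?_ (abs_nonneg _)
    rw [abs_of_nonneg (le_max_right _ _), abs_sub_comm]
    exact max_le (le_abs_self _) (abs_nonneg _)

lemma integral_mixQ (K : ℕ) (σ : ℝ) (θstar : Fin K → ℝ) (f : ℝ → ℝ) :
    ∫ y, f y ∂(mixQ K σ θstar)
      = ∫ y, ((1 / K : ℝ) * ∑ j, gauss1 σ (θstar j) y) * f y := by
  have hρ0 : ∀ y, 0 ≤ (1 / K : ℝ) * ∑ j, gauss1 σ (θstar j) y :=
    fun y => mul_nonneg (by positivity) (Finset.sum_nonneg fun j _ => gauss1_nonneg _ _ _)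
  have hρm : Measurable fun y => (1 / K : ℝ) * ∑ j, gauss1 σ (θstar j) y :=
    (continuous_const.mul (continuous_finset_sum _ fun j _ => gauss1_continuous σ _)).measurable
  have hEq : mixQ K σ θstar = volume.withDensity
      fun y => ((((1 / K : ℝ) * ∑ j, gauss1 σ (θstar j) y).toNNReal : NNReal) : ENNReal) := rfl
  rw [hEq, integral_withDensity_eq_integral_smul hρm.real_toNNReal f]
  refine integral_congr_ae (Filter.Eventually.of_forall fun y => ?_)
  simp only [NNReal.smul_def, smul_eq_mul, Real.coe_toNNReal _ (hρ0 y)]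

end aux

/-- no many-fit-one stationary configuration of the entropic OT loss.
If a group `G₁` of `k₁` true centers is `δ`-covered by a strictly larger set `I` of
fitted centers, the separation condition holds, and `δ < γΔ`, then no tilted weight
vector `a` can satisfy simultaneously the marginal conditions and the first-order
conditions — i.e. `θ` is not a stationary point of `𝓛`. -/
theorem no_many_fit_one_stationary_point
    (K : ℕ) (hK : 2 ≤ K) (σ : ℝ) (hσ : 0 < σ)
    (θstar : Fin K → ℝ) (hinj : Function.Injective θstar)
    (k₁ : ℕ) (hk₁ : 1 ≤ k₁) (hk₁K : k₁ ≤ K - 1)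
    (G₁ : Finset (Fin K)) (hG₁card : G₁.card = k₁)
    (hG₁small : ∀ i ∈ G₁, ∀ j ∉ G₁, θstar i < θstar j)
    (Δ : ℝ) (hΔpos : 0 < Δ)
    (hΔgap : ∀ g₁ ∈ G₁, ∀ g₂ ∉ G₁, Δ ≤ |θstar g₁ - θstar g₂|)
    (θ : Fin K → ℝ) (δ : ℝ)
    (I : Finset (Fin K)) (hIcard : k₁ < I.card)
    (τ : Fin K → Fin K)
    (hτmem : ∀ k ∈ I, τ k ∈ G₁)
    (hτsurj : ∀ g ∈ G₁, ∃ k ∈ I, τ k = g)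
    (hcover : ∀ k ∈ I, |θ k - θstar (τ k)| ≤ δ)
    (γ : ℝ) (hγ0 : 0 < γ) (hγ1 : γ < 1 - (k₁ : ℝ) / (I.card : ℝ))
    (hsep : Δ ≥ (K : ℝ) * σ /
      (Real.sqrt (2 * Real.pi) * ((1 - γ) * (I.card : ℝ) - (k₁ : ℝ))))
    (hδ : δ < γ * Δ) :
    ¬ ∃ a : Fin K → ℝ, (∀ k, a k ∈ Set.Ioo (0 : ℝ) 1) ∧ (∑ k, a k = 1) ∧
      (∀ k, ∫ y, resp K σ θ a k y ∂(mixQ K σ θstar) = 1 / K) ∧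
      (∀ k, ∫ y, (y - θ k) * resp K σ θ a k y ∂(mixQ K σ θstar) = 0) := by
  rintro ⟨a, ha01, -, hmarg, hfoc⟩
  have hK0 : 0 < K := by omega
  haveI : Nonempty (Fin K) := ⟨⟨0, hK0⟩⟩
  have hKne : (1 / K : ℝ) ≠ 0 := by
    simp only [ne_eq, one_div, inv_eq_zero, Nat.cast_eq_zero]
    omega
  have hI0 : 0 < I.card := lt_of_le_of_lt (Nat.zero_le _) hIcard
  have hGne : G₁.Nonempty := Finset.card_pos.mp (by omega)
  -- pointwise facts about responsibilities
  have hDpos : ∀ y : ℝ, 0 < ∑ j, a j * Real.exp (-(y - θ j) ^ 2 / (2 * σ ^ 2)) := fun y =>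
    Finset.sum_pos (fun j _ => mul_pos (ha01 j).1 (Real.exp_pos _)) Finset.univ_nonempty
  have hΨ0 : ∀ k y, 0 ≤ resp K σ θ a k y := fun k y =>
    div_nonneg (mul_nonneg (ha01 k).1.le (Real.exp_pos _).le) (hDpos y).le
  have hΨsum : ∀ y, ∑ k, resp K σ θ a k y = 1 := by
    intro y
    simp only [resp]
    rw [← Finset.sum_div]
    exact div_self (hDpos y).ne'
  have hS1 : ∀ y, ∑ k ∈ I, resp K σ θ a k y ≤ 1 := fun y =>
    (Finset.sum_le_sum_of_subset_of_nonneg (Finset.subset_univ I)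
      (fun k _ _ => hΨ0 k y)).trans (hΨsum y).le
  have hS0 : ∀ y, 0 ≤ ∑ k ∈ I, resp K σ θ a k y := fun y =>
    Finset.sum_nonneg fun k _ => hΨ0 k y
  have hΨcont : ∀ k, Continuous (resp K σ θ a k) := by
    intro k
    unfold resp
    exact Continuous.div (by fun_prop) (continuous_finset_sum _ fun j _ => by fun_prop)
      fun y => (hDpos y).ne'
  have hΨle1 : ∀ k y, resp K σ θ a k y ≤ 1 := by
    intro k y
    simp only [resp]
    rw [div_le_one (hDpos y)]
    exact Finset.single_le_sum (f := fun j => a j * Real.exp (-(y - θ j) ^ 2 / (2 * σ ^ 2)))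
      (fun j _ => mul_nonneg (ha01 j).1.le (Real.exp_pos _).le) (Finset.mem_univ k)
  have habs : ∀ g : ℝ → ℝ, (∀ y, 0 ≤ g y) → (∀ y, g y ≤ 1) → ∀ y, |g y| ≤ 1 :=
    fun g h0 h1 y => abs_le.mpr ⟨by linarith [h0 y], h1 y⟩
  have hΨabs : ∀ k y, |resp K σ θ a k y| ≤ 1 := fun k => habs _ (hΨ0 k) (hΨle1 k)
  have hScont : Continuous fun y => ∑ k ∈ I, resp K σ θ a k y :=
    continuous_finset_sum _ fun k _ => hΨcont k
  have hSabs : ∀ y, |∑ k ∈ I, resp K σ θ a k y| ≤ 1 := habs _ hS0 hS1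
  have hbdd : ∀ g h : ℝ → ℝ, Continuous g → (∀ y, |g y| ≤ 1) → Integrable h →
      Integrable fun y => g y * h y := fun g h hg hgb hh =>
    hh.bdd_mul hg.aestronglyMeasurable (Filter.Eventually.of_forall fun y => (by simpa [Real.norm_eq_abs] using hgb y : ‖g y‖ ≤ 1))
  have intφ : ∀ j : Fin K, Integrable (gauss1 σ (θstar j)) := fun j => gauss1_integrable hσ _
  have intyφ : ∀ j : Fin K, Integrable fun y => y * gauss1 σ (θstar j) y :=
    fun j => gauss1_integrable_id_mul hσ _
  -- splitting of integrals against the mixture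
  have hsplit : ∀ f : ℝ → ℝ, (∀ j, Integrable fun y => f y * gauss1 σ (θstar j) y) →
      ∫ y, f y ∂(mixQ K σ θstar)
        = (1 / K : ℝ) * ∑ j, ∫ y, f y * gauss1 σ (θstar j) y := by
    intro f hf
    rw [integral_mixQ]
    rw [show (fun y => ((1 / K : ℝ) * ∑ j, gauss1 σ (θstar j) y) * f y)
        = fun y => (1 / K : ℝ) * ∑ j, f y * gauss1 σ (θstar j) y from
      funext fun y => by
        rw [mul_assoc, Finset.sum_mul]
        congr 1
        exact Finset.sum_congr rfl fun j _ => mul_comm _ _]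
    rw [integral_const_mul, integral_finset_sum _ fun j _ => hf j]
  have hmargL : ∀ k, ∑ j, ∫ y, resp K σ θ a k y * gauss1 σ (θstar j) y = 1 := by
    intro k
    have h1 := hmarg k
    rw [hsplit _ fun j => hbdd _ _ (hΨcont k) (hΨabs k) (intφ j)] at h1
    exact mul_left_cancel₀ hKne (h1.trans (mul_one (1 / K : ℝ)).symm)
  have hfocL : ∀ k, ∑ j, ∫ y, ((y - θ k) * resp K σ θ a k y) * gauss1 σ (θstar j) y = 0 := by
    intro k
    have h1 := hfoc k
    have hint : ∀ j : Fin K,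
        Integrable fun y => ((y - θ k) * resp K σ θ a k y) * gauss1 σ (θstar j) y := by
      intro j
      have hg : Integrable fun y => (y - θ k) * gauss1 σ (θstar j) y :=
        ((intyφ j).sub ((intφ j).const_mul (θ k))).congr
          (Filter.Eventually.of_forall fun y => by simp only [Pi.sub_apply]; ring)
      exact (hbdd _ _ (hΨcont k) (hΨabs k) hg).congr
        (Filter.Eventually.of_forall fun y => by ring)
    rw [hsplit _ hint] at h1
    rcases mul_eq_zero.mp h1 with h | h
    · exact absurd h hKne
    · exact h
  have hmeanL : ∀ k, ∑ j, ∫ y, resp K σ θ a k y * (y * gauss1 σ (θstar j) y) = θ k := by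
    intro k
    have e1 : ∀ j : Fin K, ∫ y, ((y - θ k) * resp K σ θ a k y) * gauss1 σ (θstar j) y
        = (∫ y, resp K σ θ a k y * (y * gauss1 σ (θstar j) y))
          - θ k * ∫ y, resp K σ θ a k y * gauss1 σ (θstar j) y := by
      intro j
      have hE : (fun y => ((y - θ k) * resp K σ θ a k y) * gauss1 σ (θstar j) y)
          = fun y => resp K σ θ a k y * (y * gauss1 σ (θstar j) y)
            - θ k * (resp K σ θ a k y * gauss1 σ (θstar j) y) := funext fun y => by ring
      rw [hE, integral_sub (hbdd _ _ (hΨcont k) (hΨabs k) (intyφ j))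
        ((hbdd _ _ (hΨcont k) (hΨabs k) (intφ j)).const_mul (θ k)), integral_const_mul]
    have h2 := hfocL k
    rw [Finset.sum_congr rfl fun j _ => e1 j, Finset.sum_sub_distrib, ← Finset.mul_sum,
      hmargL k, mul_one] at h2
    linarith
  -- component masses
  set t : Fin K → ℝ := fun j => ∫ y, (∑ k ∈ I, resp K σ θ a k y) * gauss1 σ (θstar j) y with ht
  have intSφ : ∀ j, Integrable fun y => (∑ k ∈ I, resp K σ θ a k y) * gauss1 σ (θstar j) y :=
    fun j => hbdd _ _ hScont hSabs (intφ j)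
  have htj : ∀ j, t j = ∑ k ∈ I, ∫ y, resp K σ θ a k y * gauss1 σ (θstar j) y := by
    intro j
    rw [ht]
    dsimp only
    rw [show (fun y => (∑ k ∈ I, resp K σ θ a k y) * gauss1 σ (θstar j) y)
        = fun y => ∑ k ∈ I, resp K σ θ a k y * gauss1 σ (θstar j) y from
      funext fun y => Finset.sum_mul _ _ _]
    exact integral_finset_sum _ fun k _ => hbdd _ _ (hΨcont k) (hΨabs k) (intφ j)
  have htsum : ∑ j, t j = (I.card : ℝ) :=
    calc ∑ j, t j = ∑ j, ∑ k ∈ I, ∫ y, resp K σ θ a k y * gauss1 σ (θstar j) y :=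
          Finset.sum_congr rfl fun j _ => htj j
    _ = ∑ k ∈ I, ∑ j, ∫ y, resp K σ θ a k y * gauss1 σ (θstar j) y := Finset.sum_comm
    _ = ∑ k ∈ I, 1 := Finset.sum_congr rfl fun k _ => hmargL k
    _ = (I.card : ℝ) := by simp
  have ht0 : ∀ j, 0 ≤ t j := fun j =>
    integral_nonneg fun y => mul_nonneg (hS0 y) (gauss1_nonneg _ _ _)
  have ht1 : ∀ j, t j ≤ 1 := by
    intro j
    calc t j ≤ ∫ y, gauss1 σ (θstar j) y := integral_mono (intSφ j) (intφ j)
          fun y => mul_le_of_le_one_left (gauss1_nonneg _ _ _) (hS1 y)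
    _ = 1 := gauss1_integral hσ _
  have hmean_tot : ∑ j, ∫ y, (∑ k ∈ I, resp K σ θ a k y) * (y * gauss1 σ (θstar j) y)
      = ∑ k ∈ I, θ k := by
    have e : ∀ j : Fin K, ∫ y, (∑ k ∈ I, resp K σ θ a k y) * (y * gauss1 σ (θstar j) y)
        = ∑ k ∈ I, ∫ y, resp K σ θ a k y * (y * gauss1 σ (θstar j) y) := by
      intro j
      rw [show (fun y => (∑ k ∈ I, resp K σ θ a k y) * (y * gauss1 σ (θstar j) y))
          = fun y => ∑ k ∈ I, resp K σ θ a k y * (y * gauss1 σ (θstar j) y) from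
        funext fun y => Finset.sum_mul _ _ _]
      exact integral_finset_sum _ fun k _ => hbdd _ _ (hΨcont k) (hΨabs k) (intyφ j)
    calc ∑ j, ∫ y, (∑ k ∈ I, resp K σ θ a k y) * (y * gauss1 σ (θstar j) y)
        = ∑ j, ∑ k ∈ I, ∫ y, resp K σ θ a k y * (y * gauss1 σ (θstar j) y) :=
          Finset.sum_congr rfl fun j _ => e j
    _ = ∑ k ∈ I, ∑ j, ∫ y, resp K σ θ a k y * (y * gauss1 σ (θstar j) y) := Finset.sum_comm
    _ = ∑ k ∈ I, θ k := Finset.sum_congr rfl fun k _ => hmeanL k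
  -- per-component lower bound via the left-tail bound
  have hkey : ∀ j : Fin K, θstar j * t j - σ / Real.sqrt (2 * Real.pi)
      ≤ ∫ y, (∑ k ∈ I, resp K σ θ a k y) * (y * gauss1 σ (θstar j) y) := by
    intro j
    have hint1 : Integrable fun y =>
        ((y - θstar j) * ∑ k ∈ I, resp K σ θ a k y) * gauss1 σ (θstar j) y :=
      (hbdd _ _ hScont hSabs (gauss1_integrable_sub_mul hσ (θstar j))).congr
        (Filter.Eventually.of_forall fun y => by ring)
    have hmono : ∫ y, -(max (θstar j - y) 0 * gauss1 σ (θstar j) y)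
        ≤ ∫ y, ((y - θstar j) * ∑ k ∈ I, resp K σ θ a k y) * gauss1 σ (θstar j) y := by
      refine integral_mono (gauss1_integrable_max hσ (θstar j)).neg hint1 fun y => ?_
      rcases le_total (θstar j) y with h | h
      · rw [max_eq_right (by linarith : θstar j - y ≤ 0)]
        simp only [zero_mul, neg_zero]
        exact mul_nonneg (mul_nonneg (sub_nonneg.mpr h) (hS0 y)) (gauss1_nonneg _ _ _)
      · rw [max_eq_left (by linarith : (0:ℝ) ≤ θstar j - y)]
        nlinarith [mul_nonneg (mul_nonneg (sub_nonneg.mpr (hS1 y))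
          (gauss1_nonneg σ (θstar j) y)) (sub_nonneg.mpr h)]
    have hsplit2 : ∫ y, (∑ k ∈ I, resp K σ θ a k y) * (y * gauss1 σ (θstar j) y)
        = (∫ y, ((y - θstar j) * ∑ k ∈ I, resp K σ θ a k y) * gauss1 σ (θstar j) y)
          + θstar j * t j := by
      rw [ht]
      dsimp only
      have hE : (fun y => (∑ k ∈ I, resp K σ θ a k y) * (y * gauss1 σ (θstar j) y))
          = fun y => ((y - θstar j) * ∑ k ∈ I, resp K σ θ a k y) * gauss1 σ (θstar j) y
            + θstar j * ((∑ k ∈ I, resp K σ θ a k y) * gauss1 σ (θstar j) y) :=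
        funext fun y => by ring
      rw [hE, integral_add hint1 ((intSφ j).const_mul (θstar j)), integral_const_mul]
    rw [integral_neg, gauss1_integral_max hσ (θstar j)] at hmono
    rw [hsplit2]
    linarith
  -- main inequalities
  have main1 : ∑ j, θstar j * t j - (K : ℝ) * (σ / Real.sqrt (2 * Real.pi)) ≤ ∑ k ∈ I, θ k := by
    have h := Finset.sum_le_sum fun j (_ : j ∈ Finset.univ) => hkey j
    rw [hmean_tot] at h
    rw [Finset.sum_sub_distrib, Finset.sum_const, Finset.card_univ, Fintype.card_fin,
      nsmul_eq_mul] at h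
    exact h
  have main2 : ∑ k ∈ I, θ k ≤ ∑ k ∈ I, θstar (τ k) + (I.card : ℝ) * δ := by
    have h : ∀ k ∈ I, θ k ≤ θstar (τ k) + δ := fun k hk => by
      have h2 := abs_le.mp (hcover k hk)
      linarith [h2.2]
    calc ∑ k ∈ I, θ k ≤ ∑ k ∈ I, (θstar (τ k) + δ) := Finset.sum_le_sum h
    _ = ∑ k ∈ I, θstar (τ k) + (I.card : ℝ) * δ := by
        rw [Finset.sum_add_distrib, Finset.sum_const, nsmul_eq_mul]
  -- combinatorial lower bound on ∑ θstar j * t j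
  obtain ⟨gm, hgmG, hgmmax⟩ := Finset.exists_max_image G₁ θstar hGne
  have hμout : ∀ j, j ∉ G₁ → θstar gm + Δ ≤ θstar j := by
    intro j hj
    have h1 := hΔgap gm hgmG j hj
    have h2 := hG₁small gm hgmG j hj
    rw [abs_of_neg (by linarith : θstar gm - θstar j < 0)] at h1
    linarith
  have hfib : ∀ f : Fin K → ℝ, ∑ k ∈ I, f (τ k)
      = ∑ g ∈ G₁, ((I.filter fun k => τ k = g).card : ℝ) * f g := by
    intro f
    rw [← Finset.sum_fiberwise_of_maps_to hτmem fun k => f (τ k)]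
    refine Finset.sum_congr rfl fun g hg => ?_
    have h : ∀ k ∈ I.filter fun k => τ k = g, f (τ k) = f g := fun k hk => by
      rw [(Finset.mem_filter.mp hk).2]
    rw [Finset.sum_congr rfl h, Finset.sum_const, nsmul_eq_mul]
  have hN1 : ∀ g ∈ G₁, (1 : ℝ) ≤ ((I.filter fun k => τ k = g).card : ℝ) := by
    intro g hg
    obtain ⟨k, hkI, hkg⟩ := hτsurj g hg
    have h : 0 < (I.filter fun k => τ k = g).card :=
      Finset.card_pos.mpr ⟨k, Finset.mem_filter.mpr ⟨hkI, hkg⟩⟩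
    exact_mod_cast h
  have hNsum : ∑ g ∈ G₁, ((I.filter fun k => τ k = g).card : ℝ) = (I.card : ℝ) := by
    have h := hfib fun _ => (1 : ℝ)
    simpa using h.symm
  have htG : ∑ g ∈ G₁, t g ≤ (k₁ : ℝ) := by
    calc ∑ g ∈ G₁, t g ≤ ∑ g ∈ G₁, (1 : ℝ) := Finset.sum_le_sum fun g _ => ht1 g
    _ = (k₁ : ℝ) := by simp [hG₁card]
  have hcomb : ∑ k ∈ I, θstar (τ k) + ((I.card : ℝ) - (k₁ : ℝ)) * Δ ≤ ∑ j, θstar j * t j := by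
    have hper : ∀ g ∈ G₁, ((I.filter fun k => τ k = g).card : ℝ) * θstar g
        + (((I.filter fun k => τ k = g).card : ℝ) - t g) * Δ
        ≤ θstar g * t g + (θstar gm + Δ) * (((I.filter fun k => τ k = g).card : ℝ) - t g) := by
      intro g hg
      have h1 : t g ≤ ((I.filter fun k => τ k = g).card : ℝ) := le_trans (ht1 g) (hN1 g hg)
      have h2 : θstar g ≤ θstar gm := hgmmax g hg
      nlinarith [hΔpos]
    have hsum := Finset.sum_le_sum hper
    have e1 : ∑ g ∈ G₁, (((I.filter fun k => τ k = g).card : ℝ) * θstar g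
        + (((I.filter fun k => τ k = g).card : ℝ) - t g) * Δ)
        = ∑ k ∈ I, θstar (τ k) + ((I.card : ℝ) - ∑ g ∈ G₁, t g) * Δ := by
      rw [Finset.sum_add_distrib, ← Finset.sum_mul, Finset.sum_sub_distrib, hNsum, hfib θstar]
    have e2 : ∑ g ∈ G₁, (θstar g * t g
        + (θstar gm + Δ) * (((I.filter fun k => τ k = g).card : ℝ) - t g))
        = ∑ g ∈ G₁, θstar g * t g
          + (θstar gm + Δ) * ((I.card : ℝ) - ∑ g ∈ G₁, t g) := by
      rw [Finset.sum_add_distrib, ← Finset.mul_sum, Finset.sum_sub_distrib, hNsum]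
    rw [e1, e2] at hsum
    have hout : (θstar gm + Δ) * ((I.card : ℝ) - ∑ g ∈ G₁, t g)
        ≤ ∑ j ∈ Finset.univ \ G₁, θstar j * t j := by
      have h1 : ∑ j ∈ Finset.univ \ G₁, t j = (I.card : ℝ) - ∑ g ∈ G₁, t g := by
        rw [← htsum, ← Finset.sum_sdiff (Finset.subset_univ G₁)]; ring
      rw [← h1, Finset.mul_sum]
      exact Finset.sum_le_sum fun j hj =>
        mul_le_mul_of_nonneg_right (hμout j (Finset.mem_sdiff.mp hj).2) (ht0 j)
    have hsplitU : ∑ j, θstar j * t j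
        = ∑ g ∈ G₁, θstar g * t g + ∑ j ∈ Finset.univ \ G₁, θstar j * t j := by
      rw [← Finset.sum_sdiff (Finset.subset_univ G₁)]; ring
    have htle : ((I.card : ℝ) - (k₁ : ℝ)) * Δ ≤ ((I.card : ℝ) - ∑ g ∈ G₁, t g) * Δ := by
      apply mul_le_mul_of_nonneg_right _ hΔpos.le
      linarith [htG]
    linarith [hsum, hout, hsplitU, htle]
  -- final arithmetic contradiction
  have hs2π : (0 : ℝ) < Real.sqrt (2 * Real.pi) := by positivity
  have hn : (0 : ℝ) < (I.card : ℝ) := by exact_mod_cast hI0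
  have hc0 : 0 < (1 - γ) * (I.card : ℝ) - (k₁ : ℝ) := by
    have h := mul_lt_mul_of_pos_right hγ1 hn
    rw [sub_mul, div_mul_cancel₀ _ hn.ne'] at h
    nlinarith
  have hKv : (K : ℝ) * (σ / Real.sqrt (2 * Real.pi))
      ≤ ((1 - γ) * (I.card : ℝ) - (k₁ : ℝ)) * Δ := by
    rw [ge_iff_le, div_le_iff₀ (mul_pos hs2π hc0)] at hsep
    rw [← mul_div_assoc, div_le_iff₀ hs2π]
    calc (K : ℝ) * σ
        ≤ Δ * (Real.sqrt (2 * Real.pi) * ((1 - γ) * (I.card : ℝ) - (k₁ : ℝ))) := hsep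
    _ = ((1 - γ) * (I.card : ℝ) - (k₁ : ℝ)) * Δ * Real.sqrt (2 * Real.pi) := by ring
  have hnδ : (I.card : ℝ) * δ < (I.card : ℝ) * (γ * Δ) := mul_lt_mul_of_pos_left hδ hn
  have hring : (I.card : ℝ) * (γ * Δ) + ((1 - γ) * (I.card : ℝ) - (k₁ : ℝ)) * Δ
      = ((I.card : ℝ) - (k₁ : ℝ)) * Δ := by ring
  linarith [main1, main2, hcomb, hKv, hnδ, hring]
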